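/- For m = 2 and b = 1/2, the distribution function P(R↓ < r) = (2/√π) ∫₀^∞ √Z · (r²Z/(4 + r²Z)) e^{-Z} dZ evaluates to 1 - 8/r² + 16√π r^{-3} e^{4/r²} erfc(2/r), where erfc(x) = 1 - (2/√π)∫₀^x e^{-t²} dt. -/

import Mathlib

open Real MeasureTheory

/-- The complementary error function `erfc(x) = 1 - (2/√π) ∫₀^x e^{-t²} dt`. -/
noncomputable def erfc (x : ℝ) : ℝ :=
  1 - (2 / Real.sqrt π) * ∫ t in (0 : ℝ)..x, Real.exp (-t ^ 2)

section aux
open Set Filter intervalIntegral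

/-- The upper-tail Gaussian integral `√π/2 - ∫₀ˣ e^{-t²}`. -/
noncomputable def Wfn (x : ℝ) : ℝ := Real.sqrt π / 2 - ∫ t in (0 : ℝ)..x, Real.exp (-t ^ 2)

lemma gauss_cont : Continuous fun t : ℝ => Real.exp (-t ^ 2) := by continuity

lemma gauss_integrableOn : IntegrableOn (fun t : ℝ => Real.exp (-t ^ 2)) (Set.Ioi 0) := by
  have := (integrable_exp_neg_mul_sq (one_pos)).integrableOn (s := Set.Ioi (0:ℝ))
  simpa using this

lemma gauss_halfline : ∫ t in Set.Ioi (0:ℝ), Real.exp (-t ^ 2) = Real.sqrt π / 2 := by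
  have := integral_gaussian_Ioi 1
  simpa using this

lemma Wfn_hasDerivAt (x : ℝ) : HasDerivAt Wfn (-Real.exp (-x ^ 2)) x := by
  have h : HasDerivAt (fun u => ∫ t in (0:ℝ)..u, Real.exp (-t ^ 2)) (Real.exp (-x ^ 2)) x :=
    intervalIntegral.integral_hasDerivAt_right (gauss_cont.intervalIntegrable _ _)
      (gauss_cont.stronglyMeasurableAtFilter _ _) gauss_cont.continuousAt
  have h2 := (hasDerivAt_const x (Real.sqrt π / 2)).sub h
  rw [zero_sub] at h2
  exact h2

lemma Wfn_tendsto : Tendsto Wfn atTop (nhds 0) := by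
  have h := intervalIntegral_tendsto_integral_Ioi 0 gauss_integrableOn tendsto_id
  rw [gauss_halfline] at h
  have := (tendsto_const_nhds (x := Real.sqrt π / 2) (f := atTop (α := ℝ))).sub h
  rw [sub_self] at this
  exact this

lemma Wfn_eq_erfc (x : ℝ) : Wfn x = Real.sqrt π / 2 * erfc x := by
  have hπ : Real.sqrt π ≠ 0 := ne_of_gt (Real.sqrt_pos.mpr Real.pi_pos)
  unfold Wfn erfc
  field_simp


lemma exp_integral {c : ℝ} (hc : 0 < c) :
    ∫ s in Set.Ioi (0:ℝ), Real.exp (-(c * s)) = 1 / c := by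
  have h := Real.integral_rpow_mul_exp_neg_mul_Ioi (a := 1) one_pos hc
  simp only [sub_self, Real.rpow_zero, one_mul, Real.rpow_one, Real.Gamma_one, mul_one] at h
  exact h

lemma Gamma_three_halves : Real.Gamma (3 / 2) = Real.sqrt π / 2 := by
  rw [show (3:ℝ)/2 = 1/2 + 1 by norm_num, Real.Gamma_add_one (by norm_num),
    Real.Gamma_one_half_eq]
  ring

lemma sqrt_exp_integral {c : ℝ} (hc : 0 < c) :
    ∫ Z in Set.Ioi (0:ℝ), Real.sqrt Z * Real.exp (-(c * Z))
      = Real.sqrt π / 2 * (1 / c) ^ ((3:ℝ)/2) := by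
  have h := Real.integral_rpow_mul_exp_neg_mul_Ioi (a := 3/2) (by norm_num) hc
  rw [Gamma_three_halves] at h
  rw [show ∫ Z in Set.Ioi (0:ℝ), Real.sqrt Z * Real.exp (-(c * Z))
      = ∫ t in Set.Ioi (0:ℝ), t ^ ((3:ℝ)/2 - 1) * Real.exp (-(c * t)) from ?_, h]
  · ring
  · refine setIntegral_congr_fun measurableSet_Ioi fun t ht => ?_
    rw [show (3:ℝ)/2 - 1 = 1/2 by norm_num, ← Real.sqrt_eq_rpow]

lemma sqrtexp_integrable : IntegrableOn (fun Z => Real.sqrt Z * Real.exp (-Z)) (Set.Ioi 0) := by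
  have h := Real.GammaIntegral_convergent (s := 3/2) (by norm_num)
  refine h.congr_fun (fun x hx => ?_) measurableSet_Ioi
  beta_reduce
  rw [show (3:ℝ)/2 - 1 = 1/2 by norm_num, ← Real.sqrt_eq_rpow, mul_comm]


lemma M_eval {a : ℝ} (ha : 0 < a) :
    ∫ s in Set.Ioi (0:ℝ), Real.exp (-(a * s)) / ((1 + s) * Real.sqrt (1 + s))
      = 2 - 4 * Real.sqrt a * Real.exp a * Wfn (Real.sqrt a) := by
  set G : ℝ → ℝ := fun s => -2 * Real.exp (-(a * s)) / Real.sqrt (1 + s)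
      + 4 * Real.sqrt a * Real.exp a * Wfn (Real.sqrt a * Real.sqrt (1 + s)) with hG
  have hderiv : ∀ s : ℝ, -1 < s →
      HasDerivAt G (Real.exp (-(a * s)) / ((1 + s) * Real.sqrt (1 + s))) s := by
    intro s hs
    have hpos : (0:ℝ) < 1 + s := by linarith
    have hu : (0:ℝ) < Real.sqrt (1 + s) := Real.sqrt_pos.mpr hpos
    have hu2 : Real.sqrt (1 + s) ^ 2 = 1 + s := Real.sq_sqrt hpos.le
    have hsa : Real.sqrt a ^ 2 = a := Real.sq_sqrt ha.le
    have hsq : HasDerivAt (fun s : ℝ => Real.sqrt (1 + s)) (1 / (2 * Real.sqrt (1 + s))) s := by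
      have h1 : HasDerivAt (fun s : ℝ => 1 + s) 1 s := by
        simpa using (hasDerivAt_id s).const_add 1
      exact ((Real.hasDerivAt_sqrt hpos.ne').comp s h1).congr_deriv (by ring)
    have hexp : HasDerivAt (fun s : ℝ => Real.exp (-(a * s))) (-a * Real.exp (-(a * s))) s := by
      have h1 : HasDerivAt (fun s : ℝ => -(a * s)) (-a) s := by
        exact ((hasDerivAt_id s).const_mul a).neg.congr_deriv (by ring)
      exact ((Real.hasDerivAt_exp _).comp s h1).congr_deriv (by ring)
    have hT1 : HasDerivAt (fun s : ℝ => -2 * Real.exp (-(a * s)) / Real.sqrt (1 + s))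
        (2 * a * Real.exp (-(a * s)) / Real.sqrt (1 + s)
          + Real.exp (-(a * s)) / ((1 + s) * Real.sqrt (1 + s))) s := by
      have h := (hexp.const_mul (-2)).div hsq hu.ne'
      refine h.congr_deriv ?_
      symm
      have h3 : Real.sqrt (1 + s) ≠ 0 := hu.ne'
      field_simp
      linear_combination hu2
    have hT2 : HasDerivAt
        (fun s : ℝ => 4 * Real.sqrt a * Real.exp a * Wfn (Real.sqrt a * Real.sqrt (1 + s)))
        (-(2 * a * Real.exp (-(a * s)) / Real.sqrt (1 + s))) s := by
      have h := ((Wfn_hasDerivAt (Real.sqrt a * Real.sqrt (1 + s))).comp s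
        (hsq.const_mul (Real.sqrt a))).const_mul (4 * Real.sqrt a * Real.exp a)
      refine h.congr_deriv ?_
      symm
      have hx : (Real.sqrt a * Real.sqrt (1 + s)) ^ 2 = a * (1 + s) := by
        rw [mul_pow, hsa, hu2]
      rw [hx, show Real.exp (-(a * (1 + s))) = Real.exp (-(a * s)) * (Real.exp a)⁻¹ from by
        rw [← Real.exp_neg, ← Real.exp_add]; ring_nf]
      have h1 : Real.exp a ≠ 0 := (Real.exp_pos a).ne'
      have h3 : Real.sqrt (1 + s) ≠ 0 := hu.ne'
      field_simp
      linear_combination 4 * hsa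
    have := hT1.add hT2
    refine this.congr_deriv ?_
    ring
  have hcont : ContinuousWithinAt G (Set.Ici 0) 0 :=
    (hderiv 0 (by norm_num)).continuousAt.continuousWithinAt
  have hint : IntegrableOn
      (fun s => Real.exp (-(a * s)) / ((1 + s) * Real.sqrt (1 + s))) (Set.Ioi 0) := by
    have hbase : IntegrableOn (fun s : ℝ => Real.exp (-(a * s))) (Set.Ioi 0) := by
      simpa [neg_mul] using exp_neg_integrableOn_Ioi 0 ha
    refine hbase.mono' ?_ ?_
    · refine ContinuousOn.aestronglyMeasurable ?_ measurableSet_Ioi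
      intro s hs
      have hpos : (0:ℝ) < 1 + s := by have := hs.out; linarith
      refine ContinuousWithinAt.div ?_ ?_ (by positivity)
      · exact (Real.continuous_exp.comp (by continuity)).continuousAt.continuousWithinAt
      · exact ((continuous_const.add continuous_id).mul
          (Real.continuous_sqrt.comp (continuous_const.add continuous_id))).continuousAt.continuousWithinAt
    · filter_upwards [ae_restrict_mem measurableSet_Ioi] with s hs
      have hs0 : (0:ℝ) < s := hs
      have hpos : (0:ℝ) < 1 + s := by linarith
      have hd : (1:ℝ) ≤ (1 + s) * Real.sqrt (1 + s) := by
        nlinarith [Real.sq_sqrt hpos.le, Real.sqrt_nonneg (1 + s)]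
      rw [Real.norm_eq_abs, abs_of_nonneg (by positivity)]
      rw [div_le_iff₀ (by positivity : (0:ℝ) < (1 + s) * Real.sqrt (1 + s))]
      nlinarith [Real.exp_pos (-(a * s))]
  have htend : Filter.Tendsto G Filter.atTop (nhds 0) := by
    have hexp0 : Filter.Tendsto (fun s : ℝ => Real.exp (-(a * s))) Filter.atTop (nhds 0) :=
      Real.tendsto_exp_atBot.comp
        (Filter.tendsto_neg_atBot_iff.mpr (Filter.Tendsto.const_mul_atTop ha Filter.tendsto_id))
    have hsqrt_top : Filter.Tendsto (fun s : ℝ => Real.sqrt (1 + s)) Filter.atTop Filter.atTop := by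
      have h := (tendsto_rpow_atTop (by norm_num : (0:ℝ) < 1/2)).comp
        (Filter.tendsto_atTop_add_const_left _ 1 Filter.tendsto_id)
      exact h.congr fun s => (Real.sqrt_eq_rpow _).symm
    have h1 : Filter.Tendsto (fun s : ℝ => -2 * Real.exp (-(a * s)) / Real.sqrt (1 + s))
        Filter.atTop (nhds 0) :=
      Filter.Tendsto.div_atTop (hexp0.const_mul (-2)) hsqrt_top
    have h2 : Filter.Tendsto
        (fun s : ℝ => 4 * Real.sqrt a * Real.exp a * Wfn (Real.sqrt a * Real.sqrt (1 + s)))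
        Filter.atTop (nhds 0) := by
      have := (Wfn_tendsto.comp
        (Filter.Tendsto.const_mul_atTop (Real.sqrt_pos.mpr ha) hsqrt_top)).const_mul
        (4 * Real.sqrt a * Real.exp a)
      simpa using this
    have h3 := h1.add h2
    rw [show (0:ℝ) + 0 = 0 from add_zero 0] at h3
    exact h3
  have key := MeasureTheory.integral_Ioi_of_hasDerivAt_of_tendsto hcont
    (fun x hx => hderiv x (by have := hx.out; linarith)) hint htend
  rw [key, hG]
  norm_num [Real.sqrt_one]
  ring


lemma J_eval {a : ℝ} (ha : 0 < a) :
    ∫ Z in Set.Ioi (0:ℝ), Real.sqrt Z * Real.exp (-Z) / (Z + a)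
      = Real.sqrt π / 2
        * ∫ s in Set.Ioi (0:ℝ), Real.exp (-(a * s)) / ((1 + s) * Real.sqrt (1 + s)) := by
  set F : ℝ → ℝ → ℝ :=
    fun Z s => Real.sqrt Z * Real.exp (-((1 + s) * Z)) * Real.exp (-(a * s)) with hF
  have hInt : Integrable (Function.uncurry F)
      ((volume.restrict (Set.Ioi 0)).prod (volume.restrict (Set.Ioi 0))) := by
    have h2 : Integrable (fun s : ℝ => Real.exp (-(a * s))) (volume.restrict (Set.Ioi 0)) := by
      exact (by simpa [neg_mul] using exp_neg_integrableOn_Ioi 0 ha :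
        IntegrableOn (fun s : ℝ => Real.exp (-(a * s))) (Set.Ioi 0))
    have hg : Integrable
        (fun p : ℝ × ℝ => (Real.sqrt p.1 * Real.exp (-p.1)) * Real.exp (-(a * p.2)))
        ((volume.restrict (Set.Ioi 0)).prod (volume.restrict (Set.Ioi 0))) :=
      Integrable.mul_prod sqrtexp_integrable h2
    refine hg.mono' ?_ ?_
    · apply Continuous.aestronglyMeasurable
      apply Continuous.mul
      apply Continuous.mul
      · exact Real.continuous_sqrt.comp continuous_fst
      · exact Real.continuous_exp.comp (by continuity)
      · exact Real.continuous_exp.comp (by continuity)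
    · rw [Measure.prod_restrict]
      filter_upwards [ae_restrict_mem (measurableSet_Ioi.prod measurableSet_Ioi)] with p hp
      obtain ⟨hZ, hs⟩ := hp
      have hZ0 : (0:ℝ) < p.1 := hZ
      have hs0 : (0:ℝ) < p.2 := hs
      have : Function.uncurry F p
          = Real.sqrt p.1 * Real.exp (-((1 + p.2) * p.1)) * Real.exp (-(a * p.2)) := rfl
      rw [this, Real.norm_eq_abs, abs_of_nonneg (by positivity)]
      gcongr
      nlinarith
  calc ∫ Z in Set.Ioi (0:ℝ), Real.sqrt Z * Real.exp (-Z) / (Z + a)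
      = ∫ Z in Set.Ioi (0:ℝ), ∫ s in Set.Ioi (0:ℝ), F Z s := by
        refine (setIntegral_congr_fun measurableSet_Ioi fun Z hZ => ?_).symm
        have hZ0 : (0:ℝ) < Z := hZ
        have hZa : (0:ℝ) < Z + a := by positivity
        calc ∫ s in Set.Ioi (0:ℝ), F Z s
            = ∫ s in Set.Ioi (0:ℝ),
                (Real.sqrt Z * Real.exp (-Z)) * Real.exp (-((Z + a) * s)) := by
              refine setIntegral_congr_fun measurableSet_Ioi fun s hs => ?_
              simp only [hF, mul_assoc, ← Real.exp_add]
              congr 2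
              ring
          _ = (Real.sqrt Z * Real.exp (-Z)) * (1 / (Z + a)) := by
              rw [MeasureTheory.integral_const_mul, exp_integral hZa]
          _ = Real.sqrt Z * Real.exp (-Z) / (Z + a) := by ring
    _ = ∫ s in Set.Ioi (0:ℝ), ∫ Z in Set.Ioi (0:ℝ), F Z s :=
        MeasureTheory.integral_integral_swap hInt
    _ = ∫ s in Set.Ioi (0:ℝ),
          Real.exp (-(a * s)) * (Real.sqrt π / 2 * (1 / (1 + s)) ^ ((3:ℝ)/2)) := by
        refine setIntegral_congr_fun measurableSet_Ioi fun s hs => ?_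
        have h1s : (0:ℝ) < 1 + s := by have : (0:ℝ) < s := hs; linarith
        calc ∫ Z in Set.Ioi (0:ℝ), F Z s
            = (∫ Z in Set.Ioi (0:ℝ), Real.sqrt Z * Real.exp (-((1 + s) * Z)))
                * Real.exp (-(a * s)) := MeasureTheory.integral_mul_const _ _
          _ = _ := by rw [sqrt_exp_integral h1s]; ring
    _ = Real.sqrt π / 2
        * ∫ s in Set.Ioi (0:ℝ), Real.exp (-(a * s)) / ((1 + s) * Real.sqrt (1 + s)) := by
        rw [← MeasureTheory.integral_const_mul]
        refine setIntegral_congr_fun measurableSet_Ioi fun s hs => ?_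
        have h1s : (0:ℝ) < 1 + s := by have : (0:ℝ) < s := hs; linarith
        have hpow : ((1:ℝ) / (1 + s)) ^ ((3:ℝ)/2) = 1 / ((1 + s) * Real.sqrt (1 + s)) := by
          rw [Real.div_rpow (by norm_num) h1s.le, Real.one_rpow,
            show (3:ℝ)/2 = 1 + 1/2 by norm_num, Real.rpow_add h1s, Real.rpow_one,
            ← Real.sqrt_eq_rpow]
        rw [hpow]
        ring
end aux

/-- For `m = 2`, `b = 1/2`, the distribution function
`P(R↓ < r) = (2/√π) ∫₀^∞ √Z (r²Z/(4+r²Z)) e^{-Z} dZ` evaluates to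
`1 - 8/r² + 16√π r^{-3} e^{4/r²} erfc(2/r)`. -/
theorem fpp_distance_distribution_b_half (r : ℝ) (hr : 0 < r) :
    (2 / Real.sqrt π) *
        (∫ Z in Set.Ioi (0 : ℝ),
          Real.sqrt Z * (r ^ 2 * Z / (4 + r ^ 2 * Z)) * Real.exp (-Z)) =
      1 - 8 / r ^ 2 + 16 * Real.sqrt π * r ^ (-3 : ℤ) * Real.exp (4 / r ^ 2) * erfc (2 / r) := by
  have hπ : (0:ℝ) < Real.sqrt π := Real.sqrt_pos.mpr Real.pi_pos
  set a : ℝ := 4 / r ^ 2 with ha_def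
  have ha : 0 < a := by positivity
  have hcongr : Set.EqOn
      (fun Z => Real.sqrt Z * (r ^ 2 * Z / (4 + r ^ 2 * Z)) * Real.exp (-Z))
      (fun Z => Real.sqrt Z * Real.exp (-Z)
        - a * (Real.sqrt Z * Real.exp (-Z) / (Z + a))) (Set.Ioi 0) := by
    intro Z hZ
    have hZ0 : (0:ℝ) < Z := hZ
    have h4 : (0:ℝ) < 4 + r ^ 2 * Z := by positivity
    have hZa : (0:ℝ) < Z + a := by positivity
    simp only [ha_def]
    field_simp
    ring
  rw [setIntegral_congr_fun measurableSet_Ioi hcongr]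
  have hint2 : IntegrableOn
      (fun Z => Real.sqrt Z * Real.exp (-Z) / (Z + a)) (Set.Ioi 0) := by
    refine (sqrtexp_integrable.const_mul a⁻¹).mono' ?_ ?_
    · refine ContinuousOn.aestronglyMeasurable ?_ measurableSet_Ioi
      intro Z hZ
      have hZ0 : (0:ℝ) < Z := hZ
      refine ContinuousWithinAt.div ?_ ?_ (by positivity)
      · exact (Real.continuous_sqrt.mul (Real.continuous_exp.comp
          continuous_neg)).continuousAt.continuousWithinAt
      · exact (continuous_id.add continuous_const).continuousAt.continuousWithinAt
    · filter_upwards [ae_restrict_mem measurableSet_Ioi] with Z hZ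
      have hZ0 : (0:ℝ) < Z := hZ
      rw [Real.norm_eq_abs, abs_of_nonneg (by positivity)]
      rw [div_le_iff₀ (by positivity : (0:ℝ) < Z + a)]
      have hnn : 0 ≤ Real.sqrt Z * Real.exp (-Z) := by positivity
      calc Real.sqrt Z * Real.exp (-Z) = a⁻¹ * (Real.sqrt Z * Real.exp (-Z)) * a := by
            field_simp
        _ ≤ a⁻¹ * (Real.sqrt Z * Real.exp (-Z)) * (Z + a) := by
            gcongr
            <;> first
              | positivity
              | linarith
  rw [MeasureTheory.integral_sub sqrtexp_integrable (hint2.const_mul a),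
    MeasureTheory.integral_const_mul]
  have h1 : ∫ Z in Set.Ioi (0:ℝ), Real.sqrt Z * Real.exp (-Z) = Real.sqrt π / 2 := by
    simpa using sqrt_exp_integral one_pos
  rw [h1, J_eval ha, M_eval ha]
  have hsa : Real.sqrt a = 2 / r := by
    rw [ha_def, show (4:ℝ) / r ^ 2 = (2 / r) ^ 2 by rw [div_pow]; norm_num]
    exact Real.sqrt_sq (by positivity)
  rw [hsa, Wfn_eq_erfc]
  have hzp : r ^ (-3 : ℤ) = 1 / r ^ 3 := by
    rw [zpow_neg, show ((3:ℤ)) = ((3:ℕ):ℤ) by norm_num, zpow_natCast, one_div]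
  rw [hzp, ha_def]
  have hr' : r ≠ 0 := hr.ne'
  field_simp
  ring
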